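/- arXiv:0804.4397 — 2 statements merged into one kernel-verified Lean document; each statement's English description precedes it below -/
import Mathlib

section
/- Let α0, α1 be complex constants, U an open subset of ℂ with 0 ∉ U, and let q, p : U → ℂ be differentiable functions satisfying the third Painlevé system. Define u(t) := H_III(q(t), p(t), t; α0, α1). Then for every t ∈ U, p(t) = t·u'(t) + u(t). -/
/-- The third Painlevé Hamiltonian. -/
noncomputable def HIII (α0 α1 q p t : ℂ) : ℂ :=
  (q ^ 2 * p * (p - 1) + q * ((1 - 2 * α1) * p - α0) + t * p) / t

/-- `q, p` satisfy the third Painlevé (Hamiltonian) system on `U`. -/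
def PainleveIIISystem (α0 α1 : ℂ) (U : Set ℂ) (q p : ℂ → ℂ) : Prop :=
  ∀ t ∈ U,
    HasDerivAt q (((q t) ^ 2 * (2 * p t - 1) + (1 - 2 * α1) * q t + t) / t) t ∧
    HasDerivAt p (-(2 * q t * p t * (p t - 1) + (1 - 2 * α1) * p t - α0) / t) t

/-- Along solutions of the third Painlevé system, `p = t·u' + u`. -/
theorem p_eq_of_third_Painleve_Hamiltonian
    (α0 α1 : ℂ) (U : Set ℂ) (hU : IsOpen U) (h0 : (0 : ℂ) ∉ U)
    (q p : ℂ → ℂ) (hqp : PainleveIIISystem α0 α1 U q p)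
    (u : ℂ → ℂ) (hu : u = fun t => HIII α0 α1 (q t) (p t) t) :
    ∀ t ∈ U, p t = t * deriv u t + u t := by
  intro t ht
  have htne : t ≠ 0 := fun h => h0 (h ▸ ht)
  obtain ⟨hq, hp⟩ := hqp t ht
  set q' := ((q t) ^ 2 * (2 * p t - 1) + (1 - 2 * α1) * q t + t) / t with hq'def
  set p' := -(2 * q t * p t * (p t - 1) + (1 - 2 * α1) * p t - α0) / t with hp'def
  -- derivative of the numerator is p t
  have hN : HasDerivAt
      (fun s => q s ^ 2 * p s * (p s - 1) + q s * ((1 - 2 * α1) * p s - α0) + s * p s)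
      (p t) t := by
    have h := ((((hq.pow 2).mul hp).mul (hp.sub_const 1)).add
      (hq.mul ((hp.const_mul (1 - 2 * α1)).sub_const α0))).add
      ((hasDerivAt_id t).mul hp)
    refine h.congr_deriv ?_
    simp only [Pi.pow_apply, Pi.mul_apply, id]
    rw [hq'def, hp'def]
    field_simp
    ring
  have hu' : HasDerivAt u ((p t * t - (q t ^ 2 * p t * (p t - 1)
      + q t * ((1 - 2 * α1) * p t - α0) + t * p t) * 1) / t ^ 2) t := by
    rw [hu]
    simpa [HIII, Pi.div_def] using hN.div (hasDerivAt_id t) htne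
  rw [hu'.deriv, hu]
  simp only [HIII]
  field_simp
  ring
end

section
/- Let α0, α1 be complex constants, U an open subset of ℂ with 0 ∉ U, and let q, p : U → ℂ be differentiable functions satisfying the third Painlevé system, with p in addition differentiable so that u(t) := H_III(q(t), p(t), t; α0, α1) is twice differentiable. Then at every t ∈ U where α0 + (2α1−1)u(t) + t(2α1+1)u'(t) + t²u''(t) ≠ 0, one has q(t) = 2t²·u'(t) / (α0 + (2α1−1)u(t) + t(2α1+1)u'(t) + t²u''(t)). -/
set_option maxHeartbeats 2000000 in
/-- Along solutions of the third Painlevé system, with `u` twice differentiable,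
`q = 2t²u' / (α0 + (2α1−1)u + t(2α1+1)u' + t²u'')` wherever the denominator
is nonzero. -/
theorem q_eq_of_third_Painleve_Hamiltonian
    (α0 α1 : ℂ) (U : Set ℂ) (hU : IsOpen U) (h0 : (0 : ℂ) ∉ U)
    (q p : ℂ → ℂ) (hqp : PainleveIIISystem α0 α1 U q p)
    (u : ℂ → ℂ) (hu : u = fun t => HIII α0 α1 (q t) (p t) t)
    (hu1 : ∀ t ∈ U, DifferentiableAt ℂ u t)
    (hu2 : ∀ t ∈ U, DifferentiableAt ℂ (deriv u) t) :
    ∀ t ∈ U,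
      α0 + (2 * α1 - 1) * u t + t * (2 * α1 + 1) * deriv u t
          + t ^ 2 * deriv (deriv u) t ≠ 0 →
      q t = 2 * t ^ 2 * deriv u t /
        (α0 + (2 * α1 - 1) * u t + t * (2 * α1 + 1) * deriv u t
          + t ^ 2 * deriv (deriv u) t) := by
  -- first derivative of `u` along the solution
  have key : ∀ s ∈ U, HasDerivAt u ((p s - u s) / s) s := by
    intro s hs
    have hs0 : s ≠ 0 := fun h => h0 (h ▸ hs)
    obtain ⟨hq, hp⟩ := hqp s hs
    have hN := (((hq.pow 2).mul hp).mul (hp.sub_const 1)).add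
      ((hq.mul ((hp.const_mul ((1:ℂ) - 2 * α1)).sub_const α0)).add ((hasDerivAt_id s).mul hp))
    have hdiv := hN.div (hasDerivAt_id s) hs0
    have huval : ∀ x, u x = (q x ^ 2 * p x * (p x - 1) + q x * ((1 - 2 * α1) * p x - α0)
        + x * p x) / x := by
      intro x; rw [hu]; rfl
    have h5 : HasDerivAt u _ s := hdiv.congr_of_eventuallyEq
      (Filter.Eventually.of_forall fun x => by rw [huval x]; simp; ring)
    convert h5 using 1
    rw [huval s]
    simp only [Pi.pow_apply, Pi.mul_apply, Pi.add_apply, id]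
    field_simp
    ring
  intro t ht hD
  have ht0 : t ≠ 0 := fun h => h0 (h ▸ ht)
  obtain ⟨hq, hp⟩ := hqp t ht
  have hu' : deriv u t = (p t - u t) / t := (key t ht).deriv
  -- second derivative of u
  have heq : deriv u =ᶠ[nhds t] fun s => (p s - u s) / s := by
    filter_upwards [hU.mem_nhds ht] with s hs
    exact (key s hs).deriv
  have h2 : HasDerivAt (fun s => (p s - u s) / s)
      (((-(2 * q t * p t * (p t - 1) + (1 - 2 * α1) * p t - α0) / t - (p t - u t) / t) * t
        - (p t - u t) * 1) / t ^ 2) t :=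
    (hp.sub (key t ht)).div (hasDerivAt_id t) ht0
  have hu'' : deriv (deriv u) t
      = ((-(2 * q t * p t * (p t - 1) + (1 - 2 * α1) * p t - α0) / t - (p t - u t) / t) * t
        - (p t - u t) * 1) / t ^ 2 :=
    (h2.congr_of_eventuallyEq heq).deriv
  have huval : u t = (q t ^ 2 * p t * (p t - 1) + q t * ((1 - 2 * α1) * p t - α0)
      + t * p t) / t := by rw [hu]; rfl
  rw [eq_div_iff hD, hu', hu'', huval]
  field_simp
  ring_nf
end
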